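/- arXiv:1510.03060 — 4 statements merged into one kernel-verified Lean document; each statement's English description precedes it below -/
import Mathlib

section
/- Plotkin-type bound, case E ≥ 2C: let X ⊆ F_2^{Cm×n} be a code whose transformed codebook TX has minimum transform distance d (with respect to T̂). If d > 2(1 − C/E)Cmn, then |X| ≤ d / (d − 2(1 − C/E)Cmn). -/
set_option maxHeartbeats 1000000


open Matrix Finset

noncomputable def colDelta {a c : ℕ} (B : Matrix (Fin a) (Fin c) (ZMod 2))
    (u v : Fin a → ZMod 2) : ℕ :=
  sInf {k | ∃ s : Finset (Fin c), s.card = k ∧ u + ∑ j ∈ s, Bᵀ j = v}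

noncomputable def transDist {a b c : ℕ} (B : Matrix (Fin a) (Fin c) (ZMod 2))
    (M1 M2 : Matrix (Fin a) (Fin b) (ZMod 2)) : ℕ :=
  ∑ i : Fin b, colDelta B (fun r => M1 r i) (fun r => M2 r i)

lemma key2 : ∀ b x y : ZMod 2, b * x + (if x ≠ y then b else 0) = b * y := by decide

lemma colDelta_le_hamming {a c : ℕ} (B : Matrix (Fin a) (Fin c) (ZMod 2))
    (z1 z2 : Fin c → ZMod 2) :
    colDelta B (B.mulVec z1) (B.mulVec z2) ≤ hammingDist z1 z2 := by
  apply Nat.sInf_le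
  refine ⟨Finset.univ.filter fun j => z1 j ≠ z2 j, by rw [hammingDist], ?_⟩
  funext r
  simp only [Pi.add_apply, mulVec, dotProduct, Finset.sum_apply, transpose_apply]
  erw [Finset.sum_apply]
  simp only [transpose_apply]
  rw [Finset.sum_filter, ← Finset.sum_add_distrib]
  exact Finset.sum_congr rfl fun j _ => key2 _ _ _

lemma ind_eq (x y : ZMod 2) :
    (if x ≠ y then (1:ℝ) else 0) =
    (if x = 1 then (1:ℝ) else 0) * (1 - (if y = 1 then (1:ℝ) else 0)) +
    (1 - (if x = 1 then (1:ℝ) else 0)) * (if y = 1 then (1:ℝ) else 0) := by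
  have h : ∀ z : ZMod 2, z = 0 ∨ z = 1 := by decide
  rcases h x with hx | hx <;> rcases h y with hy | hy <;> subst hx <;> subst hy <;> norm_num

lemma swap3 {α β : Type*} [Fintype β] (s : Finset α) (F : α → α → β → ℝ) :
    ∑ x ∈ s, ∑ y ∈ s, ∑ i : β, F x y i = ∑ i : β, ∑ x ∈ s, ∑ y ∈ s, F x y i :=
  calc ∑ x ∈ s, ∑ y ∈ s, ∑ i : β, F x y i
      = ∑ x ∈ s, ∑ i : β, ∑ y ∈ s, F x y i :=
        Finset.sum_congr rfl fun x _ => Finset.sum_comm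
    _ = ∑ i : β, ∑ x ∈ s, ∑ y ∈ s, F x y i := Finset.sum_comm

/-- Plotkin-type bound, case `E ≥ 2C`: if the transformed codebook `T𝒞` has minimum
transform distance `d > 2(1 - C/E)Cmn` w.r.t. `T̂`, then `|𝒞| ≤ d/(d - 2(1 - C/E)Cmn)`.
The hypothesis `hcol` records that every column vector is expressible as `T̂V`
with `wt(V) ≤ Cm`. -/
theorem plotkin_type_large_E {C E m n d : ℕ} (hC : 0 < C) (hE : 2 * C ≤ E)
    (That : Matrix (Fin (C * m)) (Fin (E * m)) (ZMod 2))
    (T : Matrix (Fin (C * m)) (Fin (C * m)) (ZMod 2))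
    (hcol : ∀ v : Fin (C * m) → ZMod 2, ∃ z : Fin (E * m) → ZMod 2,
      That.mulVec z = v ∧ hammingNorm z ≤ C * m)
    (𝒞 : Finset (Matrix (Fin (C * m)) (Fin n) (ZMod 2)))
    (hdist : ∀ X1 ∈ 𝒞, ∀ X2 ∈ 𝒞, X1 ≠ X2 → d ≤ transDist That (T * X1) (T * X2))
    (hd : 2 * (1 - (C : ℝ) / E) * C * m * n < d) :
    (𝒞.card : ℝ) ≤ d / ((d : ℝ) - 2 * (1 - (C : ℝ) / E) * C * m * n) := by
  have hE0 : 0 < E := lt_of_lt_of_le (by omega) hE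
  have hE0' : (0:ℝ) < E := by exact_mod_cast hE0
  have hCE : (C:ℝ)/E ≤ 1 := by
    rw [div_le_one hE0']
    exact_mod_cast le_trans (by omega) hE
  set Br : ℝ := 2 * (1 - (C : ℝ) / E) * C * m * n with hBr
  have hB0 : 0 ≤ Br := by
    have : (0:ℝ) ≤ 1 - (C:ℝ)/E := by linarith
    positivity
  have hdpos : (0:ℝ) < d := lt_of_le_of_lt hB0 hd
  -- choose representatives
  choose V hV hVw using fun (X : Matrix (Fin (C*m)) (Fin n) (ZMod 2)) (i : Fin n) =>
    hcol (fun r => (T * X) r i)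
  set M := 𝒞.card with hM
  rcases Nat.eq_zero_or_pos M with hM0 | hM0
  · rw [hM0]
    push_cast
    exact le_of_lt (div_pos hdpos (by linarith))
  -- per-column bound
  have percol : ∀ i : Fin n, ∑ X1 ∈ 𝒞, ∑ X2 ∈ 𝒞, (hammingDist (V X1 i) (V X2 i) : ℝ)
      ≤ 2 * (M:ℝ)^2 * (1 - (C:ℝ)/E) * ((C:ℝ)*m) := by
    intro i
    have hRHS0 : (0:ℝ) ≤ 2 * (M:ℝ)^2 * (1 - (C:ℝ)/E) * ((C:ℝ)*m) := by
      have : (0:ℝ) ≤ 1 - (C:ℝ)/E := by linarith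
      positivity
    rcases Nat.eq_zero_or_pos m with hm | hm
    · have hz : ∀ X1 X2, hammingDist (V X1 i) (V X2 i) = 0 := by
        intro X1 X2
        have h := hammingDist_le_card_fintype (x := V X1 i) (y := V X2 i)
        simpa [hm] using h
      simp [hz]
      exact hRHS0
    -- indicator function
    set aF : Matrix (Fin (C*m)) (Fin n) (ZMod 2) → Fin (E*m) → ℝ :=
      fun X l => if V X i l = 1 then (1:ℝ) else 0 with haF
    set t : Fin (E*m) → ℝ := fun l => ∑ X ∈ 𝒞, aF X l with ht
    have hdist_eq : ∀ X1 X2, (hammingDist (V X1 i) (V X2 i) : ℝ)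
        = ∑ l : Fin (E*m), (if V X1 i l ≠ V X2 i l then (1:ℝ) else 0) := by
      intro X1 X2
      rw [hammingDist, Finset.card_filter]
      push_cast
      rfl
    have h1 : ∀ l, ∑ X ∈ 𝒞, (1 - aF X l) = (M:ℝ) - t l := by
      intro l
      rw [Finset.sum_sub_distrib, Finset.sum_const, nsmul_eq_mul, mul_one, ht]
    have hsum : ∀ l : Fin (E*m), ∑ X1 ∈ 𝒞, ∑ X2 ∈ 𝒞, (if V X1 i l ≠ V X2 i l then (1:ℝ) else 0)
        = 2 * t l * ((M:ℝ) - t l) := by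
      intro l
      calc ∑ X1 ∈ 𝒞, ∑ X2 ∈ 𝒞, (if V X1 i l ≠ V X2 i l then (1:ℝ) else 0)
          = ∑ X1 ∈ 𝒞, ∑ X2 ∈ 𝒞, (aF X1 l * (1 - aF X2 l) + (1 - aF X1 l) * aF X2 l) :=
            Finset.sum_congr rfl fun X1 _ => Finset.sum_congr rfl fun X2 _ => ind_eq _ _
        _ = ∑ X1 ∈ 𝒞, (aF X1 l * ((M:ℝ) - t l) + (1 - aF X1 l) * t l) := by
            refine Finset.sum_congr rfl fun X1 _ => ?_
            rw [Finset.sum_add_distrib, ← Finset.mul_sum, ← Finset.mul_sum, h1, ht]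
        _ = 2 * t l * ((M:ℝ) - t l) := by
            rw [Finset.sum_add_distrib, ← Finset.sum_mul, ← Finset.sum_mul, h1, ht]
            ring
    -- constraints on t
    have ht_nonneg : ∀ l, 0 ≤ t l := fun l =>
      Finset.sum_nonneg fun X _ => by
        show (0:ℝ) ≤ if V X i l = 1 then 1 else 0
        split <;> norm_num
    have hnorm : ∀ X, ∑ l : Fin (E*m), aF X l = (hammingNorm (V X i) : ℝ) := by
      intro X
      rw [hammingNorm, Finset.card_filter]
      push_cast
      refine Finset.sum_congr rfl fun l _ => ?_
      have h01 : ∀ x : ZMod 2, (x = 1) ↔ (x ≠ 0) := by decide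
      simp only [haF, h01]
    have hS_le : ∑ l : Fin (E*m), t l ≤ (M:ℝ) * ((C:ℝ)*m) := by
      rw [ht]
      rw [Finset.sum_comm]
      calc ∑ X ∈ 𝒞, ∑ l : Fin (E*m), aF X l = ∑ X ∈ 𝒞, (hammingNorm (V X i) : ℝ) :=
            Finset.sum_congr rfl fun X _ => hnorm X
        _ ≤ ∑ _X ∈ 𝒞, ((C:ℝ)*m) := Finset.sum_le_sum fun X _ => by
              have := hVw X i
              push_cast
              exact_mod_cast this
        _ = (M:ℝ) * ((C:ℝ)*m) := by rw [Finset.sum_const, nsmul_eq_mul]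
    have hcs : (∑ l : Fin (E*m), t l)^2 ≤ ((E:ℝ)*m) * ∑ l : Fin (E*m), (t l)^2 := by
      have := sq_sum_le_card_mul_sum_sq (s := (Finset.univ : Finset (Fin (E*m)))) (f := t)
      simpa using this
    -- algebra
    have hc : (0:ℝ) < (E:ℝ)*m := by
      have : (0:ℝ) < m := by exact_mod_cast hm
      positivity
    set S : ℝ := ∑ l : Fin (E*m), t l with hS
    set Q : ℝ := ∑ l : Fin (E*m), (t l)^2 with hQ
    have expand : ∑ l : Fin (E*m), (2 * t l * ((M:ℝ) - t l)) = 2 * ((M:ℝ) * S - Q) := by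
      rw [hS, hQ, Finset.mul_sum, ← Finset.sum_sub_distrib, Finset.mul_sum]
      exact Finset.sum_congr rfl fun l _ => by ring
    calc ∑ X1 ∈ 𝒞, ∑ X2 ∈ 𝒞, (hammingDist (V X1 i) (V X2 i) : ℝ)
        = ∑ X1 ∈ 𝒞, ∑ X2 ∈ 𝒞, ∑ l : Fin (E*m), (if V X1 i l ≠ V X2 i l then (1:ℝ) else 0) :=
          Finset.sum_congr rfl fun X1 _ => Finset.sum_congr rfl fun X2 _ => hdist_eq X1 X2
      _ = ∑ l : Fin (E*m), ∑ X1 ∈ 𝒞, ∑ X2 ∈ 𝒞, (if V X1 i l ≠ V X2 i l then (1:ℝ) else 0) :=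
          swap3 𝒞 _
      _ = ∑ l : Fin (E*m), 2 * t l * ((M:ℝ) - t l) :=
          Finset.sum_congr rfl fun l _ => hsum l
      _ = 2 * ((M:ℝ) * S - Q) := expand
      _ ≤ 2 * (M:ℝ)^2 * (1 - (C:ℝ)/E) * ((C:ℝ)*m) := by
          rw [← mul_le_mul_iff_right₀ hc]
          have hre : ((E:ℝ)*m) * (2 * (M:ℝ)^2 * (1 - (C:ℝ)/E) * ((C:ℝ)*m))
              = 2*(M:ℝ)^2*((C:ℝ)*m)*((E:ℝ)*m - (C:ℝ)*m) := by
            field_simp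
          rw [hre]
          have hA2 : 2*((C:ℝ)*m) ≤ (E:ℝ)*m := by
            have : (2*C : ℝ) ≤ E := by exact_mod_cast hE
            have hm' : (0:ℝ) ≤ m := by positivity
            nlinarith
          have hS0 : 0 ≤ S := Finset.sum_nonneg fun l _ => ht_nonneg l
          have hM0' : (0:ℝ) ≤ M := by positivity
          have hkey1 : 0 ≤ (M:ℝ)*((C:ℝ)*m) - S := by linarith
          have hkey2 : 0 ≤ ((E:ℝ)*m)*(M:ℝ) - (M:ℝ)*((C:ℝ)*m) - S := by nlinarith
          nlinarith [mul_nonneg hkey1 hkey2, hcs]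
  -- lower bound on the double sum
  have lowerN : M * (M - 1) * d ≤ ∑ X1 ∈ 𝒞, ∑ X2 ∈ 𝒞, transDist That (T*X1) (T*X2) := by
    calc M * (M-1) * d = ∑ _X1 ∈ 𝒞, (M-1) * d := by
          rw [Finset.sum_const, smul_eq_mul, ← mul_assoc]
      _ ≤ ∑ X1 ∈ 𝒞, ∑ X2 ∈ 𝒞.erase X1, transDist That (T*X1) (T*X2) := by
          refine Finset.sum_le_sum fun X1 h1 => ?_
          have hcarderase : (𝒞.erase X1).card = M - 1 := Finset.card_erase_of_mem h1
          calc (M-1) * d = ∑ _X2 ∈ 𝒞.erase X1, d := by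
                rw [Finset.sum_const, smul_eq_mul, hcarderase]
            _ ≤ _ := Finset.sum_le_sum fun X2 h2 =>
                hdist X1 h1 X2 (Finset.mem_of_mem_erase h2) (Ne.symm (Finset.ne_of_mem_erase h2))
      _ ≤ ∑ X1 ∈ 𝒞, ∑ X2 ∈ 𝒞, transDist That (T*X1) (T*X2) :=
          Finset.sum_le_sum fun X1 _ =>
            Finset.sum_le_sum_of_subset (Finset.erase_subset _ _)
  -- upper bound on the double sum
  have upperN : ∀ X1 ∈ 𝒞, ∀ X2 ∈ 𝒞, transDist That (T*X1) (T*X2)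
      ≤ ∑ i : Fin n, hammingDist (V X1 i) (V X2 i) := by
    intro X1 _ X2 _
    refine Finset.sum_le_sum fun i _ => ?_
    have e1 := hV X1 i
    have e2 := hV X2 i
    rw [← e1, ← e2]
    exact colDelta_le_hamming That (V X1 i) (V X2 i)
  have upper : (∑ X1 ∈ 𝒞, ∑ X2 ∈ 𝒞, (transDist That (T*X1) (T*X2) : ℝ)) ≤ (M:ℝ)^2 * Br := by
    calc ∑ X1 ∈ 𝒞, ∑ X2 ∈ 𝒞, (transDist That (T*X1) (T*X2) : ℝ)
        ≤ ∑ X1 ∈ 𝒞, ∑ X2 ∈ 𝒞, ∑ i : Fin n, (hammingDist (V X1 i) (V X2 i) : ℝ) := by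
          refine Finset.sum_le_sum fun X1 h1 => Finset.sum_le_sum fun X2 h2 => ?_
          have h := upperN X1 h1 X2 h2
          exact_mod_cast h
      _ = ∑ i : Fin n, ∑ X1 ∈ 𝒞, ∑ X2 ∈ 𝒞, (hammingDist (V X1 i) (V X2 i) : ℝ) :=
          swap3 𝒞 _
      _ ≤ ∑ _i : Fin n, 2 * (M:ℝ)^2 * (1 - (C:ℝ)/E) * ((C:ℝ)*m) :=
          Finset.sum_le_sum fun i _ => percol i
      _ = (M:ℝ)^2 * Br := by
          rw [Finset.sum_const, Finset.card_univ, Fintype.card_fin, nsmul_eq_mul, hBr]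
          ring
  -- combine
  have key : (M:ℝ) * ((M:ℝ) - 1) * d ≤ (M:ℝ)^2 * Br := by
    have hcast : ((M * (M-1) * d : ℕ) : ℝ) = (M:ℝ) * ((M:ℝ) - 1) * d := by
      push_cast [Nat.cast_sub hM0]
      ring
    calc (M:ℝ) * ((M:ℝ) - 1) * d = ((M * (M-1) * d : ℕ) : ℝ) := hcast.symm
      _ ≤ ((∑ X1 ∈ 𝒞, ∑ X2 ∈ 𝒞, transDist That (T*X1) (T*X2) : ℕ) : ℝ) := by
          exact_mod_cast lowerN
      _ = ∑ X1 ∈ 𝒞, ∑ X2 ∈ 𝒞, (transDist That (T*X1) (T*X2) : ℝ) := by push_cast; rfl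
      _ ≤ (M:ℝ)^2 * Br := upper
  have hMpos : (0:ℝ) < M := by exact_mod_cast hM0
  rw [le_div_iff₀ (by linarith)]
  nlinarith [key, hMpos]
end

section
/- Plotkin-type bound, case E < 2C: let X ⊆ F_2^{Cm×n} be a code whose transformed codebook has minimum transform distance d with respect to T̂. If d > Emn/2, then |X| ≤ 2d / (2d − Emn). -/
open Matrix Finset

lemma zmod2_cases : ∀ x : ZMod 2, x = 0 ∨ x = 1 := by decide

lemma colDelta_le_of {a c : ℕ} (B : Matrix (Fin a) (Fin c) (ZMod 2))
    (u v : Fin a → ZMod 2) (z : Fin c → ZMod 2) (h : u + B.mulVec z = v) :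
    colDelta B u v ≤ hammingNorm z := by
  apply Nat.sInf_le
  refine ⟨(Finset.univ.filter (fun j => z j ≠ 0)), rfl, ?_⟩
  rw [← h]
  congr 1
  funext r
  change (∑ j ∈ Finset.univ.filter (fun j => z j ≠ 0), (fun i => B i j)) r = _
  rw [Finset.sum_apply]
  show ∑ j ∈ Finset.univ.filter (fun j => z j ≠ 0), B r j = ∑ j, B r j * z j
  rw [Finset.sum_filter]
  refine Finset.sum_congr rfl (fun j _ => ?_)
  rcases zmod2_cases (z j) with hz | hz <;> simp [hz]

lemma pair_count {α : Type*} [DecidableEq α] (s : Finset α) (f : α → ZMod 2) :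
    2 * (∑ x ∈ s, ∑ y ∈ s, (if f x = f y then (0:ℕ) else 1)) ≤ s.card ^ 2 := by
  classical
  set A := s.filter (fun x => f x = 1) with hA
  have hcardA : A.card ≤ s.card := Finset.card_filter_le _ _
  have hsplit : ∀ x ∈ s, (∑ y ∈ s, (if f x = f y then (0:ℕ) else 1)) =
      if f x = 1 then s.card - A.card else A.card := by
    intro x _
    have hsum : (∑ y ∈ s, (if f x = f y then (0:ℕ) else 1)) =
        (s.filter (fun y => ¬ (f x = f y))).card := by
      rw [Finset.card_filter]
      exact Finset.sum_congr rfl (fun y _ => by split_ifs with h <;> simp_all)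
    rcases zmod2_cases (f x) with hx | hx
    · rw [hsum, if_neg (by rw [hx]; decide)]
      congr 1
      apply Finset.filter_congr
      intro y _
      rcases zmod2_cases (f y) with hy | hy <;> simp [hx, hy]
    · rw [hsum, if_pos hx]
      have : s.filter (fun y => ¬ (f x = f y)) = s \ A := by
        rw [hA, ← Finset.filter_not]
        apply Finset.filter_congr
        intro y _; simp [hx, eq_comm]
      rw [this, Finset.card_sdiff_of_subset (Finset.filter_subset _ _)]
  rw [Finset.sum_congr rfl hsplit, Finset.sum_ite, Finset.sum_const, Finset.sum_const,
    smul_eq_mul, smul_eq_mul]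
  have h1 : s.filter (fun x => f x = 1) = A := rfl
  have h2 : (s.filter (fun x => ¬ f x = 1)).card = s.card - A.card := by
    rw [Finset.filter_not, Finset.card_sdiff_of_subset (Finset.filter_subset _ _), hA]
  rw [h1, h2]
  have hM : s.card = A.card + (s.card - A.card) := by omega
  set t := s.card - A.card
  rw [hM]
  zify
  nlinarith [sq_nonneg ((A.card : ℤ) - t)]

/-- Plotkin-type bound, case `E < 2C`: if the transformed codebook `T𝒞` has minimum
transform distance `d > Emn/2` w.r.t. `T̂`, then `|𝒞| ≤ 2d/(2d - Emn)`.
The hypothesis `hcol` records that every column vector is expressible as `T̂V`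
with `wt(V) ≤ Cm`. -/
theorem plotkin_type_small_E {C E m n d : ℕ} (hC : 0 < C) (hE : E < 2 * C)
    (That : Matrix (Fin (C * m)) (Fin (E * m)) (ZMod 2))
    (T : Matrix (Fin (C * m)) (Fin (C * m)) (ZMod 2))
    (hcol : ∀ v : Fin (C * m) → ZMod 2, ∃ z : Fin (E * m) → ZMod 2,
      That.mulVec z = v ∧ hammingNorm z ≤ C * m)
    (𝒞 : Finset (Matrix (Fin (C * m)) (Fin n) (ZMod 2)))
    (hdist : ∀ X1 ∈ 𝒞, ∀ X2 ∈ 𝒞, X1 ≠ X2 → d ≤ transDist That (T * X1) (T * X2))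
    (hd : (E * m * n : ℝ) / 2 < d) :
    (𝒞.card : ℝ) ≤ 2 * d / (2 * (d : ℝ) - E * m * n) := by
  classical
  set M := 𝒞.card with hM
  set Z : (Fin (C * m) → ZMod 2) → (Fin (E * m) → ZMod 2) := fun v => (hcol v).choose with hZ
  have hZspec : ∀ v, That.mulVec (Z v) = v := fun v => (hcol v).choose_spec.1
  set col : Matrix (Fin (C * m)) (Fin n) (ZMod 2) → Fin n → (Fin (C * m) → ZMod 2) :=
    fun X i => (fun r => (T * X) r i) with hcoldef
  have key : ∀ X1 X2 : Matrix (Fin (C * m)) (Fin n) (ZMod 2),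
      transDist That (T * X1) (T * X2) ≤
        ∑ i : Fin n, hammingDist (Z (col X1 i)) (Z (col X2 i)) := by
    intro X1 X2
    apply Finset.sum_le_sum
    intro i _
    have hmv : col X1 i + That.mulVec (Z (col X1 i) + Z (col X2 i)) = col X2 i := by
      rw [Matrix.mulVec_add, hZspec, hZspec, ← add_assoc]
      funext r
      simp [CharTwo.add_self_eq_zero]
    calc colDelta That (col X1 i) (col X2 i)
        ≤ hammingNorm (Z (col X1 i) + Z (col X2 i)) := colDelta_le_of _ _ _ _ hmv
      _ = hammingDist (Z (col X1 i)) (Z (col X2 i)) := by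
          rw [hammingNorm, hammingDist]
          congr 1
          apply Finset.filter_congr
          intro l _
          have h2 : ∀ x y : ZMod 2, x + y ≠ 0 ↔ x ≠ y := by decide
          simpa using h2 (Z (col X1 i) l) (Z (col X2 i) l)
  -- lower bound
  have hlower : d * (M * (M - 1)) ≤
      ∑ X1 ∈ 𝒞, ∑ X2 ∈ 𝒞, ∑ i : Fin n, hammingDist (Z (col X1 i)) (Z (col X2 i)) := by
    have h1 : d * (M * (M - 1)) = ∑ X1 ∈ 𝒞, ∑ X2 ∈ 𝒞.erase X1, d := by
      rw [Finset.sum_congr rfl (fun X1 hX1 => by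
        rw [Finset.sum_const, Finset.card_erase_of_mem hX1, smul_eq_mul])]
      rw [Finset.sum_const, smul_eq_mul]
      ring
    rw [h1]
    apply Finset.sum_le_sum
    intro X1 hX1
    calc ∑ _X2 ∈ 𝒞.erase X1, d
        ≤ ∑ X2 ∈ 𝒞.erase X1, ∑ i : Fin n, hammingDist (Z (col X1 i)) (Z (col X2 i)) := by
          apply Finset.sum_le_sum
          intro X2 hX2
          exact le_trans (hdist X1 hX1 X2 (Finset.mem_of_mem_erase hX2)
            (Ne.symm (Finset.ne_of_mem_erase hX2))) (key X1 X2)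
      _ ≤ ∑ X2 ∈ 𝒞, ∑ i : Fin n, hammingDist (Z (col X1 i)) (Z (col X2 i)) :=
          Finset.sum_le_sum_of_subset (Finset.erase_subset _ _)
  -- upper bound
  have hupper : 2 * (∑ X1 ∈ 𝒞, ∑ X2 ∈ 𝒞, ∑ i : Fin n,
      hammingDist (Z (col X1 i)) (Z (col X2 i))) ≤ n * (E * m) * M ^ 2 := by
    set g : Matrix (Fin (C * m)) (Fin n) (ZMod 2) → Matrix (Fin (C * m)) (Fin n) (ZMod 2)
        → Fin n → Fin (E * m) → ℕ :=
      fun X1 X2 i l => if Z (col X1 i) l = Z (col X2 i) l then (0:ℕ) else 1 with hg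
    have hdEq : ∀ (X1 X2 : Matrix (Fin (C * m)) (Fin n) (ZMod 2)) (i : Fin n),
        hammingDist (Z (col X1 i)) (Z (col X2 i)) = ∑ l : Fin (E * m), g X1 X2 i l := by
      intro X1 X2 i
      rw [hammingDist, Finset.card_filter]
      exact Finset.sum_congr rfl (fun l _ => by rw [hg]; split_ifs with h <;> simp_all)
    have hswap : (∑ X1 ∈ 𝒞, ∑ X2 ∈ 𝒞, ∑ i : Fin n, ∑ l : Fin (E * m), g X1 X2 i l) =
        ∑ i : Fin n, ∑ l : Fin (E * m), ∑ X1 ∈ 𝒞, ∑ X2 ∈ 𝒞, g X1 X2 i l :=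
      calc (∑ X1 ∈ 𝒞, ∑ X2 ∈ 𝒞, ∑ i : Fin n, ∑ l : Fin (E * m), g X1 X2 i l)
          = ∑ X1 ∈ 𝒞, ∑ i : Fin n, ∑ X2 ∈ 𝒞, ∑ l : Fin (E * m), g X1 X2 i l :=
            Finset.sum_congr rfl (fun X1 _ => Finset.sum_comm)
        _ = ∑ i : Fin n, ∑ X1 ∈ 𝒞, ∑ X2 ∈ 𝒞, ∑ l : Fin (E * m), g X1 X2 i l :=
            Finset.sum_comm
        _ = ∑ i : Fin n, ∑ X1 ∈ 𝒞, ∑ l : Fin (E * m), ∑ X2 ∈ 𝒞, g X1 X2 i l :=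
            Finset.sum_congr rfl (fun i _ =>
              Finset.sum_congr rfl (fun X1 _ => Finset.sum_comm))
        _ = ∑ i : Fin n, ∑ l : Fin (E * m), ∑ X1 ∈ 𝒞, ∑ X2 ∈ 𝒞, g X1 X2 i l :=
            Finset.sum_congr rfl (fun i _ => Finset.sum_comm)
    simp_rw [hdEq]
    rw [hswap, Finset.mul_sum]
    calc ∑ i : Fin n, 2 * (∑ l : Fin (E * m), ∑ X1 ∈ 𝒞, ∑ X2 ∈ 𝒞, g X1 X2 i l)
        ≤ ∑ _i : Fin n, ∑ _l : Fin (E * m), M ^ 2 := by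
          apply Finset.sum_le_sum
          intro i _
          rw [Finset.mul_sum]
          apply Finset.sum_le_sum
          intro l _
          exact pair_count 𝒞 (fun X => Z (col X i) l)
      _ = n * (E * m) * M ^ 2 := by
          simp [Finset.sum_const, mul_assoc]
  have hnat : 2 * (d * (M * (M - 1))) ≤ n * (E * m) * M ^ 2 :=
    le_trans (Nat.mul_le_mul_left 2 hlower) hupper
  have hdenom : (0:ℝ) < 2 * (d:ℝ) - E * m * n := by linarith
  rw [le_div_iff₀ hdenom]
  rcases Nat.eq_zero_or_pos M with hM0 | hMpos
  · rw [hM0]; push_cast; nlinarith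
  · have hMR : (0:ℝ) < (M:ℝ) := by exact_mod_cast hMpos
    have hnatR : 2 * ((d:ℝ) * ((M:ℝ) * ((M:ℝ) - 1))) ≤ (n:ℝ) * ((E:ℝ) * (m:ℝ)) * (M:ℝ) ^ 2 := by
      have hM1 : (((M - 1 : ℕ)):ℝ) = (M:ℝ) - 1 := by
        have h1M : 1 ≤ M := hMpos
        push_cast [Nat.cast_sub h1M]
        ring
      calc 2 * ((d:ℝ) * ((M:ℝ) * ((M:ℝ) - 1)))
          = ((2 * (d * (M * (M - 1))) : ℕ) : ℝ) := by push_cast [hM1]; ring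
        _ ≤ ((n * (E * m) * M ^ 2 : ℕ) : ℝ) := by exact_mod_cast hnat
        _ = (n:ℝ) * ((E:ℝ) * (m:ℝ)) * (M:ℝ) ^ 2 := by push_cast; ring
    nlinarith
end

section
/- Asymptotic Plotkin-type rate bound: for networks with E ≥ 2C, if p ≤ (1 − C/E)(C/E) then any achievable rate satisfies R ≤ 1 − E²p/(CE − C²); if p > (1 − C/E)(C/E) the achievable rate is 0. For networks with E < 2C, if p ≤ 1/4 then R ≤ 1 − 4p, and if p > 1/4 the achievable rate is 0. -/
open Matrix Finset

lemma colDelta_self {a c : ℕ} (B : Matrix (Fin a) (Fin c) (ZMod 2))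
    (u : Fin a → ZMod 2) : colDelta B u u = 0 := by
  have h0 : 0 ∈ {k | ∃ s : Finset (Fin c), s.card = k ∧ u + ∑ j ∈ s, Bᵀ j = u} :=
    ⟨∅, by simp; exact Finset.sum_empty⟩
  exact Nat.le_zero.mp (Nat.sInf_le h0)

lemma colDelta_le {a c : ℕ} (B : Matrix (Fin a) (Fin c) (ZMod 2))
    (u v : Fin a → ZMod 2) (z : Fin c → ZMod 2) (hz : B.mulVec z = u + v) :
    colDelta B u v ≤ hammingNorm z := by
  apply Nat.sInf_le
  refine ⟨Finset.univ.filter (fun j => z j ≠ 0), rfl, ?_⟩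
  have hsum : ∑ j ∈ Finset.univ.filter (fun j => z j ≠ 0), Bᵀ j = B.mulVec z := by
    funext r
    have : B.mulVec z r = ∑ j, B r j * z j := rfl
    have h2 : (∑ j ∈ Finset.univ.filter (fun j => z j ≠ 0), Bᵀ j) r
        = ∑ j ∈ Finset.univ.filter (fun j => z j ≠ 0), Bᵀ j r := Finset.sum_apply _ _ _
    rw [this, h2]
    have h1 : ∑ j ∈ Finset.univ.filter (fun j => z j ≠ 0), B r j * z j
        = ∑ j, B r j * z j :=
      Finset.sum_filter_of_ne (fun j _ hne h => hne (by rw [h, mul_zero]))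
    rw [← h1]
    apply Finset.sum_congr rfl
    intro j hj
    have hzj : z j = 1 := by
      have := (Finset.mem_filter.mp hj).2
      revert this; generalize z j = x; revert x; decide
    rw [transpose_apply, hzj, mul_one]
  rw [hsum, hz]
  funext i
  show u i + (u i + v i) = v i
  generalize u i = x; generalize v i = y
  revert x y; decide

lemma pair_count_s11 {α : Type*} [DecidableEq α] (S : Finset α) (g : α → ZMod 2) :
    ∑ a ∈ S, ∑ b ∈ S, (if g a ≠ g b then (1:ℕ) else 0)
      = 2 * (S.filter (fun a => g a = 1)).card * (S.filter (fun a => g a = 0)).card := by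
  have inner : ∀ a ∈ S, ∑ b ∈ S, (if g a ≠ g b then (1:ℕ) else 0)
      = (S.filter (fun b => g b = g a + 1)).card := by
    intro a _
    rw [Finset.card_filter]
    apply Finset.sum_congr rfl
    intro b _
    congr 1
    have : (g a ≠ g b) = (g b = g a + 1) := by
      generalize g a = x; generalize g b = y; revert x y; decide
    rw [this]
  rw [Finset.sum_congr rfl inner]
  rw [← Finset.sum_filter_add_sum_filter_not S (fun a => g a = 1)]
  have e1 : ∀ a ∈ S.filter (fun a => g a = 1),
      (S.filter (fun b => g b = g a + 1)).card = (S.filter (fun b => g b = 0)).card := by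
    intro a ha
    have := (Finset.mem_filter.mp ha).2
    congr 1
    apply Finset.filter_congr
    intro b _
    rw [this]
    generalize g b = y; revert y; decide
  have e2 : ∀ a ∈ S.filter (fun a => ¬ g a = 1),
      (S.filter (fun b => g b = g a + 1)).card = (S.filter (fun b => g b = 1)).card := by
    intro a ha
    have h0 : g a = 0 := by
      have := (Finset.mem_filter.mp ha).2
      revert this; generalize g a = x; revert x; decide
    congr 1
    apply Finset.filter_congr
    intro b _
    rw [h0]
    generalize g b = y; revert y; decide
  rw [Finset.sum_congr rfl e1, Finset.sum_congr rfl e2]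
  rw [Finset.sum_const, Finset.sum_const]
  have hnot : S.filter (fun a => ¬ g a = 1) = S.filter (fun a => g a = 0) := by
    apply Finset.filter_congr
    intro b _
    generalize g b = x; revert x; decide
  rw [hnot]
  ring

lemma sum_hammingDist_eq {α : Type*} [DecidableEq α] {N : ℕ} (S : Finset α)
    (z : α → Fin N → ZMod 2) :
    ∑ a ∈ S, ∑ b ∈ S, hammingDist (z a) (z b)
      = ∑ j : Fin N, 2 * (S.filter (fun a => z a j = 1)).card
          * (S.filter (fun a => z a j = 0)).card := by
  have hd : ∀ a b : α, hammingDist (z a) (z b)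
      = ∑ j : Fin N, if z a j ≠ z b j then (1:ℕ) else 0 := by
    intro a b
    exact Finset.card_filter _ _
  calc ∑ a ∈ S, ∑ b ∈ S, hammingDist (z a) (z b)
      = ∑ a ∈ S, ∑ j : Fin N, ∑ b ∈ S, (if z a j ≠ z b j then (1:ℕ) else 0) := by
        apply Finset.sum_congr rfl; intro a _
        simp_rw [hd]; exact Finset.sum_comm
    _ = ∑ j : Fin N, ∑ a ∈ S, ∑ b ∈ S, (if z a j ≠ z b j then (1:ℕ) else 0) :=
        Finset.sum_comm
    _ = _ := by
        apply Finset.sum_congr rfl; intro j _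
        exact pair_count_s11 S (fun a => z a j)

lemma filter_card_sum {α : Type*} [DecidableEq α] {N : ℕ} (S : Finset α)
    (z : α → Fin N → ZMod 2) :
    ∑ j : Fin N, (S.filter (fun a => z a j = 1)).card = ∑ a ∈ S, hammingNorm (z a) := by
  have : ∀ j, (S.filter (fun a => z a j = 1)).card
      = ∑ a ∈ S, if z a j = 1 then (1:ℕ) else 0 := fun j => Finset.card_filter _ _
  simp_rw [this]
  rw [Finset.sum_comm]
  apply Finset.sum_congr rfl
  intro a _
  rw [hammingNorm, Finset.card_filter]
  apply Finset.sum_congr rfl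
  intro j _
  congr 1
  generalize z a j = x; revert x; decide

lemma filter_card_add {α : Type*} [DecidableEq α] (S : Finset α) (g : α → ZMod 2) :
    (S.filter (fun a => g a = 1)).card + (S.filter (fun a => g a = 0)).card = S.card := by
  conv_rhs => rw [← Finset.card_filter_add_card_filter_not (p := fun a => g a = 1)]
  congr 2
  apply Finset.filter_congr
  intro b _
  generalize g b = x; revert x; decide

lemma sum_hammingDist_le_general {α : Type*} [DecidableEq α] {N : ℕ} (S : Finset α)
    (z : α → Fin N → ZMod 2) :
    ((∑ a ∈ S, ∑ b ∈ S, hammingDist (z a) (z b) : ℕ) : ℝ) ≤ (N : ℝ) / 2 * S.card ^ 2 := by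
  rw [sum_hammingDist_eq]
  push_cast
  have hle : ∀ j ∈ (Finset.univ : Finset (Fin N)),
      (2:ℝ) * (S.filter (fun a => z a j = 1)).card * (S.filter (fun a => z a j = 0)).card
        ≤ (S.card : ℝ) ^ 2 / 2 := by
    intro j _
    have h := filter_card_add S (fun a => z a j)
    have h' : ((S.filter (fun a => z a j = 1)).card : ℝ)
        + (S.filter (fun a => z a j = 0)).card = S.card := by exact_mod_cast h
    nlinarith [sq_nonneg (((S.filter (fun a => z a j = 1)).card : ℝ)
      - (S.filter (fun a => z a j = 0)).card)]
  calc (∑ j : Fin N, (2:ℝ) * (S.filter (fun a => z a j = 1)).card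
          * (S.filter (fun a => z a j = 0)).card)
      ≤ ∑ _j : Fin N, (S.card : ℝ) ^ 2 / 2 := Finset.sum_le_sum hle
    _ = (N : ℝ) * ((S.card : ℝ) ^ 2 / 2) := by simp [Finset.sum_const]
    _ = (N : ℝ) / 2 * S.card ^ 2 := by ring

lemma sum_hammingDist_le_budget {α : Type*} [DecidableEq α] {N W : ℕ} (hN : 0 < N)
    (h2W : 2 * W ≤ N) (S : Finset α) (z : α → Fin N → ZMod 2)
    (hw : ∀ a ∈ S, hammingNorm (z a) ≤ W) :
    ((∑ a ∈ S, ∑ b ∈ S, hammingDist (z a) (z b) : ℕ) : ℝ)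
      ≤ 2 * W * (1 - (W : ℝ) / N) * S.card ^ 2 := by
  rw [sum_hammingDist_eq]
  push_cast
  set M : ℝ := (S.card : ℝ) with hM
  set f : Fin N → ℝ := fun j => ((S.filter (fun a => z a j = 1)).card : ℝ) with hf
  have hab : ∀ j, f j + ((S.filter (fun a => z a j = 0)).card : ℝ) = M := by
    intro j
    have h := filter_card_add S (fun a => z a j)
    simp only [hf, hM]
    exact_mod_cast h
  have hsum_eq : (∑ j : Fin N, (2:ℝ) * (S.filter (fun a => z a j = 1)).card
      * (S.filter (fun a => z a j = 0)).card)
      = 2 * M * (∑ j, f j) - 2 * ∑ j, (f j) ^ 2 := by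
    calc (∑ j : Fin N, (2:ℝ) * (S.filter (fun a => z a j = 1)).card
        * (S.filter (fun a => z a j = 0)).card)
        = ∑ j : Fin N, (2 * M * f j - 2 * (f j) ^ 2) := by
          apply Finset.sum_congr rfl
          intro j _
          linear_combination (2 * f j) * (hab j)
      _ = 2 * M * (∑ j, f j) - 2 * ∑ j, (f j) ^ 2 := by
          rw [Finset.sum_sub_distrib, Finset.mul_sum, Finset.mul_sum]
  rw [hsum_eq]
  have ht : (∑ j, f j) ≤ (W : ℝ) * M := by
    have h1 : ∑ j : Fin N, (S.filter (fun a => z a j = 1)).card ≤ W * S.card := by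
      rw [filter_card_sum]
      calc ∑ a ∈ S, hammingNorm (z a) ≤ ∑ _a ∈ S, W := Finset.sum_le_sum hw
        _ = S.card * W := by simp [Finset.sum_const, Nat.smul_one_eq_cast, mul_comm]
        _ = W * S.card := mul_comm _ _
    calc (∑ j, f j) = ((∑ j : Fin N, (S.filter (fun a => z a j = 1)).card : ℕ) : ℝ) := by
          push_cast [hf]; rfl
      _ ≤ ((W * S.card : ℕ) : ℝ) := by exact_mod_cast h1
      _ = (W : ℝ) * M := by push_cast [hM]; ring
  have hCS : (∑ j, f j) ^ 2 ≤ (N : ℝ) * ∑ j, (f j) ^ 2 := by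
    have := sq_sum_le_card_mul_sum_sq (s := (Finset.univ : Finset (Fin N))) (f := f)
    simpa using this
  have ht0 : 0 ≤ (∑ j, f j) := Finset.sum_nonneg (fun j _ => by positivity)
  have hM0 : 0 ≤ M := by positivity
  have hNR : (0:ℝ) < N := by exact_mod_cast hN
  have h2WR : 2 * (W:ℝ) ≤ N := by exact_mod_cast h2W
  have hgoal : (2 * M * (∑ j, f j) - 2 * ∑ j, (f j) ^ 2) * N ≤ 2 * W * (N - W) * M ^ 2 := by
    nlinarith [mul_nonneg (sub_nonneg.mpr ht)
        (by nlinarith : (0:ℝ) ≤ (N:ℝ) * M - (W:ℝ) * M - (∑ j, f j)), hCS]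
  have heq : 2 * (W:ℝ) * (1 - (W : ℝ) / N) * M ^ 2 = 2 * W * (N - W) * M ^ 2 / N := by
    field_simp
  rw [heq, le_div_iff₀ hNR]
  exact hgoal

section Main

variable {C E m n : ℕ}

/-- choice of low-weight representatives, per column -/
lemma exists_reps (That : Matrix (Fin (C * m)) (Fin (E * m)) (ZMod 2))
    (T : Matrix (Fin (C * m)) (Fin (C * m)) (ZMod 2))
    (hcov : ∀ v : Fin (C * m) → ZMod 2, ∃ z : Fin (E * m) → ZMod 2,
      That.mulVec z = v ∧ hammingNorm z ≤ C * m) (i : Fin n) :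
    ∃ zf : Matrix (Fin (C * m)) (Fin n) (ZMod 2) → (Fin (E * m) → ZMod 2),
      (∀ X, hammingNorm (zf X) ≤ C * m) ∧
      (∀ X1 X2, colDelta That (fun r => (T * X1) r i) (fun r => (T * X2) r i)
        ≤ hammingDist (zf X1) (zf X2)) := by
  choose z hz hw using hcov
  refine ⟨fun X => z (fun r => (T * X) r i), fun X => hw _, fun X1 X2 => ?_⟩
  set u := fun r => (T * X1) r i
  set v := fun r => (T * X2) r i
  have hmv : That.mulVec (z u + z v) = u + v := by
    rw [Matrix.mulVec_add, hz, hz]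
  have h1 : colDelta That u v ≤ hammingNorm (z u + z v) := colDelta_le That u v _ hmv
  have h2 : hammingNorm (z u + z v) = hammingDist (z u) (z v) := by
    rw [hammingDist_eq_hammingNorm]
    congr 1
    funext j
    show z u j + z v j = -z u j + z v j
    generalize z u j = x; generalize z v j = y
    revert x y; decide
  rw [h2] at h1
  exact h1

lemma pair_sum_general (That : Matrix (Fin (C * m)) (Fin (E * m)) (ZMod 2))
    (T : Matrix (Fin (C * m)) (Fin (C * m)) (ZMod 2))
    (hcov : ∀ v : Fin (C * m) → ZMod 2, ∃ z : Fin (E * m) → ZMod 2,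
      That.mulVec z = v ∧ hammingNorm z ≤ C * m)
    (S : Finset (Matrix (Fin (C * m)) (Fin n) (ZMod 2))) (K : Finset (Fin n)) (c : ℝ)
    (hcase : ∀ i : Fin n, ∀ zf : Matrix (Fin (C * m)) (Fin n) (ZMod 2) → (Fin (E * m) → ZMod 2),
      (∀ X, hammingNorm (zf X) ≤ C * m) →
      ((∑ X1 ∈ S, ∑ X2 ∈ S, hammingDist (zf X1) (zf X2) : ℕ) : ℝ) ≤ c * S.card ^ 2) :
    ((∑ X1 ∈ S, ∑ X2 ∈ S, ∑ i ∈ K,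
      colDelta That (fun r => (T * X1) r i) (fun r => (T * X2) r i) : ℕ) : ℝ)
      ≤ c * K.card * S.card ^ 2 := by
  have hswap : ∑ X1 ∈ S, ∑ X2 ∈ S, ∑ i ∈ K,
      colDelta That (fun r => (T * X1) r i) (fun r => (T * X2) r i)
      = ∑ i ∈ K, ∑ X1 ∈ S, ∑ X2 ∈ S,
        colDelta That (fun r => (T * X1) r i) (fun r => (T * X2) r i) := by
    calc ∑ X1 ∈ S, ∑ X2 ∈ S, ∑ i ∈ K,
        colDelta That (fun r => (T * X1) r i) (fun r => (T * X2) r i)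
        = ∑ X1 ∈ S, ∑ i ∈ K, ∑ X2 ∈ S,
          colDelta That (fun r => (T * X1) r i) (fun r => (T * X2) r i) :=
        Finset.sum_congr rfl (fun X1 _ => Finset.sum_comm)
      _ = _ := Finset.sum_comm
  rw [hswap]
  have hcol : ∀ i ∈ K, ((∑ X1 ∈ S, ∑ X2 ∈ S,
      colDelta That (fun r => (T * X1) r i) (fun r => (T * X2) r i) : ℕ) : ℝ)
      ≤ c * S.card ^ 2 := by
    intro i _
    obtain ⟨zf, hwt, hle⟩ := exists_reps That T hcov i
    have h1 : (∑ X1 ∈ S, ∑ X2 ∈ S,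
        colDelta That (fun r => (T * X1) r i) (fun r => (T * X2) r i) : ℕ)
        ≤ ∑ X1 ∈ S, ∑ X2 ∈ S, hammingDist (zf X1) (zf X2) :=
      Finset.sum_le_sum (fun X1 _ => Finset.sum_le_sum (fun X2 _ => hle X1 X2))
    calc ((∑ X1 ∈ S, ∑ X2 ∈ S,
          colDelta That (fun r => (T * X1) r i) (fun r => (T * X2) r i) : ℕ) : ℝ)
        ≤ ((∑ X1 ∈ S, ∑ X2 ∈ S, hammingDist (zf X1) (zf X2) : ℕ) : ℝ) := by exact_mod_cast h1
      _ ≤ c * S.card ^ 2 := hcase i zf hwt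
  calc ((∑ i ∈ K, ∑ X1 ∈ S, ∑ X2 ∈ S,
        colDelta That (fun r => (T * X1) r i) (fun r => (T * X2) r i) : ℕ) : ℝ)
      = ∑ i ∈ K, ((∑ X1 ∈ S, ∑ X2 ∈ S,
        colDelta That (fun r => (T * X1) r i) (fun r => (T * X2) r i) : ℕ) : ℝ) := by
        push_cast; rfl
    _ ≤ ∑ _i ∈ K, c * S.card ^ 2 := Finset.sum_le_sum hcol
    _ = c * K.card * S.card ^ 2 := by rw [Finset.sum_const]; push_cast; ring

end Main

section Main2
variable {C E m n : ℕ}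

lemma fiber_bound (hn : 0 < n)
    (That : Matrix (Fin (C * m)) (Fin (E * m)) (ZMod 2))
    (T : Matrix (Fin (C * m)) (Fin (C * m)) (ZMod 2))
    (𝒞 : Finset (Matrix (Fin (C * m)) (Fin n) (ZMod 2))) (d c : ℝ) (hd : 1 ≤ d)
    (hc : 0 < c)
    (hpair : ∀ S : Finset (Matrix (Fin (C * m)) (Fin n) (ZMod 2)), ∀ K : Finset (Fin n),
      ((∑ X1 ∈ S, ∑ X2 ∈ S, ∑ i ∈ K,
        colDelta That (fun r => (T * X1) r i) (fun r => (T * X2) r i) : ℕ) : ℝ)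
        ≤ c * K.card * S.card ^ 2)
    (hdist : ∀ X1 ∈ 𝒞, ∀ X2 ∈ 𝒞, X1 ≠ X2 →
      d ≤ (transDist That (T * X1) (T * X2) : ℝ))
    (k : ℕ) (hk : k ≤ n) (hck : c * k ≤ d - 1) :
    (𝒞.card : ℝ) ≤ 2 ^ (C * m * (n - k)) * d := by
  obtain ⟨K, -, hKcard⟩ := Finset.exists_subset_card_eq
    (show k ≤ (Finset.univ : Finset (Fin n)).card by simpa using hk)
  classical
  set φ : Matrix (Fin (C * m)) (Fin n) (ZMod 2) →
      ({i : Fin n // i ∈ Kᶜ} × Fin (C * m) → ZMod 2) :=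
    fun X q => X q.2 q.1.1 with hφ
  -- each fiber has size ≤ d
  have hfiber : ∀ y, ((𝒞.filter (fun X => φ X = y)).card : ℝ) ≤ d := by
    intro y
    set S := 𝒞.filter (fun X => φ X = y) with hS
    -- distinct elements of the fiber have distance ≥ d concentrated on K
    have hKdist : ∀ X1 ∈ S, ∀ X2 ∈ S, X1 ≠ X2 →
        d ≤ ((∑ i ∈ K, colDelta That (fun r => (T * X1) r i) (fun r => (T * X2) r i) : ℕ) : ℝ) := by
      intro X1 h1 X2 h2 hne
      have h1' := Finset.mem_filter.mp h1
      have h2' := Finset.mem_filter.mp h2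
      have hcols : ∀ i ∈ Kᶜ, ∀ r, (T * X1) r i = (T * X2) r i := by
        intro i hi r
        have hX : ∀ l, X1 l i = X2 l i := by
          intro l
          have := congrFun (h1'.2.trans h2'.2.symm) (⟨⟨i, hi⟩, l⟩ :
            {i : Fin n // i ∈ Kᶜ} × Fin (C * m))
          exact this
        simp only [Matrix.mul_apply]
        exact Finset.sum_congr rfl (fun l _ => by rw [hX l])
      have hzero : ∑ i ∈ Kᶜ, colDelta That (fun r => (T * X1) r i) (fun r => (T * X2) r i) = 0 := by
        apply Finset.sum_eq_zero
        intro i hi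
        have : (fun r => (T * X1) r i) = (fun r => (T * X2) r i) := funext (hcols i hi)
        rw [this]
        exact colDelta_self That _
      have hsplit : (transDist That (T * X1) (T * X2) : ℕ)
          = ∑ i ∈ K, colDelta That (fun r => (T * X1) r i) (fun r => (T * X2) r i) := by
        rw [transDist, ← Finset.sum_add_sum_compl K, hzero, add_zero]
      have := hdist X1 h1'.1 X2 h2'.1 hne
      rw [hsplit] at this
      exact this
    -- Plotkin step
    by_cases hS0 : S.card = 0
    · rw [hS0]; push_cast; linarith
    have hM1 : (1 : ℝ) ≤ S.card := by
      have : 1 ≤ S.card := Nat.one_le_iff_ne_zero.mpr hS0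
      exact_mod_cast this
    have hlow : d * S.card * (S.card - 1) ≤ ((∑ X1 ∈ S, ∑ X2 ∈ S, ∑ i ∈ K,
        colDelta That (fun r => (T * X1) r i) (fun r => (T * X2) r i) : ℕ) : ℝ) := by
      push_cast
      have hstep : ∀ X1 ∈ S, d * (S.card - 1) ≤ ∑ X2 ∈ S, ((∑ i ∈ K,
          colDelta That (fun r => (T * X1) r i) (fun r => (T * X2) r i) : ℕ) : ℝ) := by
        intro X1 h1
        have : ∑ X2 ∈ S.erase X1, d ≤ ∑ X2 ∈ S.erase X1, ((∑ i ∈ K,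
            colDelta That (fun r => (T * X1) r i) (fun r => (T * X2) r i) : ℕ) : ℝ) := by
          apply Finset.sum_le_sum
          intro X2 h2
          exact hKdist X1 h1 X2 (Finset.mem_of_mem_erase h2)
            (fun h => (Finset.ne_of_mem_erase h2) h.symm)
        have hsub : ∑ X2 ∈ S.erase X1, ((∑ i ∈ K,
            colDelta That (fun r => (T * X1) r i) (fun r => (T * X2) r i) : ℕ) : ℝ)
            ≤ ∑ X2 ∈ S, ((∑ i ∈ K,
            colDelta That (fun r => (T * X1) r i) (fun r => (T * X2) r i) : ℕ) : ℝ) := by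
          apply Finset.sum_le_sum_of_subset_of_nonneg (Finset.erase_subset X1 S)
          intro X2 _ _
          positivity
        have hcount : ∑ X2 ∈ S.erase X1, d = ((S.card : ℝ) - 1) * d := by
          rw [Finset.sum_const, Finset.card_erase_of_mem h1, nsmul_eq_mul,
            Nat.cast_sub (Nat.one_le_iff_ne_zero.mpr hS0), Nat.cast_one]
        calc d * ((S.card : ℝ) - 1) = ((S.card : ℝ) - 1) * d := by ring
          _ = ∑ X2 ∈ S.erase X1, d := hcount.symm
          _ ≤ _ := le_trans this hsub
      calc d * (S.card : ℝ) * ((S.card : ℝ) - 1)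
          = ∑ _X1 ∈ S, d * ((S.card : ℝ) - 1) := by rw [Finset.sum_const]; push_cast; ring
        _ ≤ ∑ X1 ∈ S, ∑ X2 ∈ S, ((∑ i ∈ K,
            colDelta That (fun r => (T * X1) r i) (fun r => (T * X2) r i) : ℕ) : ℝ) :=
            Finset.sum_le_sum hstep
        _ = _ := by push_cast; rfl
    have hup := hpair S K
    rw [hKcard] at hup
    have hck' : c * k * (S.card : ℝ) ^ 2 ≤ (d - 1) * (S.card : ℝ) ^ 2 := by
      apply mul_le_mul_of_nonneg_right hck
      positivity
    nlinarith [hlow, hup, hck', hM1]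
  -- count fibers
  have hsplit : 𝒞.card = ∑ y ∈ 𝒞.image φ, (𝒞.filter (fun X => φ X = y)).card :=
    Finset.card_eq_sum_card_fiberwise (fun X hX => Finset.mem_image_of_mem φ hX)
  have himg : (𝒞.image φ).card ≤ 2 ^ ((n - k) * (C * m)) := by
    have h1 : (𝒞.image φ).card ≤ Fintype.card ({i : Fin n // i ∈ Kᶜ} × Fin (C * m) → ZMod 2) :=
      Finset.card_le_univ _
    have h2 : Fintype.card ({i : Fin n // i ∈ Kᶜ} × Fin (C * m) → ZMod 2)
        = 2 ^ ((n - k) * (C * m)) := by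
      rw [Fintype.card_fun]
      simp [Fintype.card_coe, Finset.card_compl, hKcard]
    omega
  calc (𝒞.card : ℝ) = ∑ y ∈ 𝒞.image φ, ((𝒞.filter (fun X => φ X = y)).card : ℝ) := by
        rw [hsplit]; push_cast; rfl
    _ ≤ ∑ _y ∈ 𝒞.image φ, d := Finset.sum_le_sum (fun y _ => hfiber y)
    _ = ((𝒞.image φ).card : ℝ) * d := by rw [Finset.sum_const]; push_cast; ring
    _ ≤ (2 ^ ((n - k) * (C * m)) : ℝ) * d := by
        apply mul_le_mul_of_nonneg_right _ (by linarith)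
        exact_mod_cast himg
    _ = 2 ^ (C * m * (n - k)) * d := by rw [mul_comm (n-k) (C*m)]

end Main2

section Rate
variable {C E m n : ℕ}

lemma rate_bound (hC : 0 < C) (hm : 0 < m) (hn : 0 < n)
    (That : Matrix (Fin (C * m)) (Fin (E * m)) (ZMod 2))
    (T : Matrix (Fin (C * m)) (Fin (C * m)) (ZMod 2))
    (𝒞 : Finset (Matrix (Fin (C * m)) (Fin n) (ZMod 2))) (d c : ℝ) (hd : 1 ≤ d)
    (hc : 0 < c)
    (hpair : ∀ S : Finset (Matrix (Fin (C * m)) (Fin n) (ZMod 2)), ∀ K : Finset (Fin n),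
      ((∑ X1 ∈ S, ∑ X2 ∈ S, ∑ i ∈ K,
        colDelta That (fun r => (T * X1) r i) (fun r => (T * X2) r i) : ℕ) : ℝ)
        ≤ c * K.card * S.card ^ 2)
    (hdist : ∀ X1 ∈ 𝒞, ∀ X2 ∈ 𝒞, X1 ≠ X2 →
      d ≤ (transDist That (T * X1) (T * X2) : ℝ)) :
    Real.logb 2 𝒞.card / ((C : ℝ) * m * n)
      ≤ 1 - ((min n ⌊(d - 1) / c⌋₊ : ℕ) : ℝ) / n
        + Real.logb 2 d / ((C : ℝ) * m * n) := by
  set k : ℕ := min n ⌊(d - 1) / c⌋₊ with hk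
  have hkn : k ≤ n := min_le_left _ _
  have hck : c * k ≤ d - 1 := by
    have h1 : (k : ℝ) ≤ ⌊(d - 1) / c⌋₊ := by exact_mod_cast min_le_right n _
    have h2 : (⌊(d - 1) / c⌋₊ : ℝ) ≤ (d - 1) / c :=
      Nat.floor_le (div_nonneg (by linarith) hc.le)
    have := h1.trans h2
    calc c * (k : ℝ) ≤ c * ((d - 1) / c) := by
          exact mul_le_mul_of_nonneg_left this hc.le
      _ = d - 1 := by field_simp
  have hM := fiber_bound hn That T 𝒞 d c hd hc hpair hdist k hkn hck
  have hCmn : (0 : ℝ) < (C : ℝ) * m * n := by positivity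
  have hlog : Real.logb 2 (𝒞.card : ℝ) ≤ (C * m * (n - k) : ℕ) + Real.logb 2 d := by
    have hrhs : Real.logb 2 ((2 : ℝ) ^ (C * m * (n - k)) * d)
        = (C * m * (n - k) : ℕ) + Real.logb 2 d := by
      rw [Real.logb_mul (by positivity) (by linarith), Real.logb_pow,
        Real.logb_self_eq_one (by norm_num)]
      ring
    by_cases hM0 : 𝒞.card = 0
    · rw [hM0]
      push_cast
      rw [Real.logb_zero]
      have : (0:ℝ) ≤ Real.logb 2 d := Real.logb_nonneg (by norm_num) hd
      positivity
    · have h0 : (0 : ℝ) < (𝒞.card : ℝ) := by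
        exact_mod_cast Nat.pos_of_ne_zero hM0
      calc Real.logb 2 (𝒞.card : ℝ) ≤ Real.logb 2 ((2 : ℝ) ^ (C * m * (n - k)) * d) :=
            Real.logb_le_logb_of_le (by norm_num) h0 hM
        _ = _ := hrhs
  calc Real.logb 2 (𝒞.card : ℝ) / ((C : ℝ) * m * n)
      ≤ ((C * m * (n - k) : ℕ) + Real.logb 2 d) / ((C : ℝ) * m * n) := by
        exact (div_le_div_iff_of_pos_right hCmn).mpr hlog
      _ = 1 - ((k : ℕ) : ℝ) / n + Real.logb 2 d / ((C : ℝ) * m * n) := by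
        rw [add_div]
        congr 1
        have : ((C * m * (n - k) : ℕ) : ℝ) = (C : ℝ) * m * ((n : ℝ) - k) := by
          push_cast [Nat.cast_sub hkn]
          ring
        rw [this]
        have hnR : (0 : ℝ) < (n : ℝ) := by positivity
        field_simp

end Rate

set_option maxHeartbeats 2000000 in
/-- Asymptotic Plotkin-type rate bound.  Any good code for the worst-case binary-error
network channel must have transformed minimum transform distance at least `2pEmn + 1`;
for any `ε > 0` and all large enough block lengths `n`, every such code satisfies:
if `E ≥ 2C` and `p ≤ (1 - C/E)(C/E)` then its rate is at most `1 - E²p/(CE - C²) + ε`;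
if `E ≥ 2C` and `p > (1 - C/E)(C/E)` then its rate is at most `ε` (rate `0` asymptotically);
if `E < 2C` and `p ≤ 1/4` then its rate is at most `1 - 4p + ε`;
if `E < 2C` and `p > 1/4` then its rate is at most `ε`. -/
theorem plotkin_type_rate_bound {C E m : ℕ} (hC : 0 < C) (hm : 0 < m) (hCE : C ≤ E)
    (p : ℝ) (hp0 : 0 ≤ p) :
    ∀ ε > (0 : ℝ), ∃ n₀ : ℕ, ∀ n ≥ n₀,
      ∀ (That : Matrix (Fin (C * m)) (Fin (E * m)) (ZMod 2))
        (T : Matrix (Fin (C * m)) (Fin (C * m)) (ZMod 2)),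
        (∀ v : Fin (C * m) → ZMod 2, ∃ z : Fin (E * m) → ZMod 2,
          That.mulVec z = v ∧ hammingNorm z ≤ C * m) →
      ∀ 𝒞 : Finset (Matrix (Fin (C * m)) (Fin n) (ZMod 2)),
        (∀ X1 ∈ 𝒞, ∀ X2 ∈ 𝒞, X1 ≠ X2 →
          2 * p * E * m * n + 1 ≤ (transDist That (T * X1) (T * X2) : ℝ)) →
        ((2 * C ≤ E → p ≤ (1 - (C : ℝ) / E) * ((C : ℝ) / E) →
            Real.logb 2 𝒞.card / (C * m * n) ≤
              1 - (E : ℝ) ^ 2 * p / ((C : ℝ) * E - (C : ℝ) ^ 2) + ε) ∧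
         (2 * C ≤ E → (1 - (C : ℝ) / E) * ((C : ℝ) / E) < p →
            Real.logb 2 𝒞.card / (C * m * n) ≤ ε) ∧
         (E < 2 * C → p ≤ 1 / 4 →
            Real.logb 2 𝒞.card / (C * m * n) ≤ 1 - 4 * p + ε) ∧
         (E < 2 * C → 1 / 4 < p →
            Real.logb 2 𝒞.card / (C * m * n) ≤ ε)) := by
  intro ε hε
  set A : ℝ := 2 * Real.sqrt (2 * p * E * m + 1) / Real.log 2 with hA
  refine ⟨max (⌈(2 * A / (ε * C * m)) ^ 2⌉₊ + 1) (⌈2 / ε⌉₊ + 1), ?_⟩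
  intro n hn That T hcov 𝒞 hdist
  have hE : 0 < E := lt_of_lt_of_le hC hCE
  have hn1 : 0 < n :=
    lt_of_lt_of_le (Nat.succ_pos _) (le_trans (le_max_left _ _) hn)
  have hnR : (0 : ℝ) < n := by exact_mod_cast hn1
  have hCR : (0 : ℝ) < C := by exact_mod_cast hC
  have hmR : (0 : ℝ) < m := by exact_mod_cast hm
  have hER : (0 : ℝ) < E := by exact_mod_cast hE
  have hCmn : (0 : ℝ) < (C : ℝ) * m * n := by positivity
  set d : ℝ := 2 * p * E * m * n + 1 with hd
  have hprod : (0 : ℝ) ≤ 2 * p * E * m := by positivity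
  have hd1 : 1 ≤ d := by
    rw [hd]; nlinarith
  -- the tail term
  have hl2 : (0 : ℝ) < Real.log 2 := Real.log_pos one_lt_two
  have hA0 : 0 ≤ A := by
    rw [hA]; positivity
  have htail : Real.logb 2 d / ((C : ℝ) * m * n) ≤ ε / 2 := by
    have hx0 : (0 : ℝ) < d := by linarith
    have hlogle : Real.log d ≤ 2 * Real.sqrt d := by
      have h1 : Real.log (Real.sqrt d) = Real.log d / 2 := Real.log_sqrt (by linarith)
      have h2 : Real.log (Real.sqrt d) ≤ Real.sqrt d - 1 :=
        Real.log_le_sub_one_of_pos (Real.sqrt_pos.mpr hx0)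
      nlinarith [Real.sqrt_nonneg d]
    have hdle : d ≤ (2 * p * E * m + 1) * n := by
      rw [hd]
      have : (1 : ℝ) ≤ n := by exact_mod_cast hn1
      nlinarith
    have hsq : Real.sqrt d ≤ Real.sqrt (2 * p * E * m + 1) * Real.sqrt n := by
      rw [← Real.sqrt_mul (by positivity) (n : ℝ)]
      exact Real.sqrt_le_sqrt hdle
    have hAn : Real.logb 2 d ≤ A * Real.sqrt n := by
      rw [Real.logb]
      calc Real.log d / Real.log 2
          ≤ (2 * (Real.sqrt (2 * p * E * m + 1) * Real.sqrt n)) / Real.log 2 := by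
            apply (div_le_div_iff_of_pos_right hl2).mpr
            nlinarith [hlogle, hsq]
        _ = A * Real.sqrt n := by rw [hA]; ring
    have hsn : 2 * A / (ε * C * m) ≤ Real.sqrt n := by
      have h2 : (⌈(2 * A / (ε * C * m)) ^ 2⌉₊ + 1 : ℕ) ≤ n := le_trans (le_max_left _ _) hn
      have h4 : ((⌈(2 * A / (ε * C * m)) ^ 2⌉₊ + 1 : ℕ) : ℝ) ≤ n := by exact_mod_cast h2
      have h3 : ((2 * A / (ε * C * m)) ^ 2 : ℝ) ≤ (⌈(2 * A / (ε * C * m)) ^ 2⌉₊ : ℝ) :=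
        Nat.le_ceil _
      have h1 : ((2 * A / (ε * C * m)) ^ 2 : ℝ) ≤ n := by push_cast at h4; linarith
      calc 2 * A / (ε * C * m) ≤ |2 * A / (ε * C * m)| := le_abs_self _
        _ = Real.sqrt ((2 * A / (ε * C * m)) ^ 2) := (Real.sqrt_sq_eq_abs _).symm
        _ ≤ Real.sqrt n := Real.sqrt_le_sqrt h1
    have hfin : A * Real.sqrt n ≤ ε / 2 * ((C : ℝ) * m * n) := by
      have hn_eq : (n : ℝ) = Real.sqrt n * Real.sqrt n := (Real.mul_self_sqrt hnR.le).symm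
      have hpos : (0 : ℝ) < ε * C * m := by positivity
      rw [div_le_iff₀ hpos] at hsn
      calc A * Real.sqrt n ≤ (ε * C * m * Real.sqrt n / 2) * Real.sqrt n := by
            nlinarith [Real.sqrt_nonneg (n : ℝ)]
        _ = ε / 2 * ((C : ℝ) * m * (Real.sqrt n * Real.sqrt n)) := by ring
        _ = ε / 2 * ((C : ℝ) * m * n) := by rw [← hn_eq]
    calc Real.logb 2 d / ((C : ℝ) * m * n) ≤ (ε / 2 * ((C : ℝ) * m * n)) / ((C : ℝ) * m * n) :=
          (div_le_div_iff_of_pos_right hCmn).mpr (le_trans hAn hfin)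
      _ = ε / 2 := by field_simp
  have hinv : 1 / (n : ℝ) ≤ ε / 2 := by
    have h2 : (⌈2 / ε⌉₊ + 1 : ℕ) ≤ n := le_trans (le_max_right _ _) hn
    have h4 : ((⌈2 / ε⌉₊ + 1 : ℕ) : ℝ) ≤ n := by exact_mod_cast h2
    have h3 : (2 / ε : ℝ) ≤ ⌈2 / ε⌉₊ := Nat.le_ceil _
    have h5 : (2 / ε : ℝ) ≤ n := by push_cast at h4; linarith
    rw [div_le_div_iff₀ hnR (by norm_num : (0:ℝ) < 2)]
    have : 2 ≤ ε * n := by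
      rw [div_le_iff₀ hε] at h5
      linarith [h5]
    linarith
  refine ⟨?_, ?_, ?_, ?_⟩
  · -- E ≥ 2C, p small
    intro h2CE hp
    have hCltE : (C : ℝ) < E := by
      have : C < E := by omega
      exact_mod_cast this
    set c₁ : ℝ := 2 * ((C : ℝ) * m) * (1 - ((C : ℝ) * m) / ((E : ℝ) * m)) with hc₁
    have hfrac : ((C : ℝ) * m) / ((E : ℝ) * m) < 1 := by
      rw [div_lt_one (by positivity)]
      nlinarith
    have hc₁pos : 0 < c₁ := by
      rw [hc₁]
      apply mul_pos (by positivity)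
      linarith
    have hpair₁ : ∀ S : Finset (Matrix (Fin (C * m)) (Fin n) (ZMod 2)), ∀ K : Finset (Fin n),
        ((∑ X1 ∈ S, ∑ X2 ∈ S, ∑ i ∈ K,
          colDelta That (fun r => (T * X1) r i) (fun r => (T * X2) r i) : ℕ) : ℝ)
          ≤ c₁ * K.card * S.card ^ 2 := by
      intro S K
      apply pair_sum_general That T hcov S K c₁
      intro i zf hwt
      have hb := sum_hammingDist_le_budget (N := E * m) (W := C * m)
        (Nat.mul_pos hE hm) (by calc 2 * (C * m) = (2 * C) * m := by ring
          _ ≤ E * m := Nat.mul_le_mul_right m h2CE) S zf (fun a _ => hwt a)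
      calc ((∑ a ∈ S, ∑ b ∈ S, hammingDist (zf a) (zf b) : ℕ) : ℝ)
          ≤ 2 * (C * m : ℕ) * (1 - ((C * m : ℕ) : ℝ) / ((E * m : ℕ) : ℝ)) * S.card ^ 2 := hb
        _ = c₁ * S.card ^ 2 := by rw [hc₁]; push_cast; ring
    have hrb := rate_bound hC hm hn1 That T 𝒞 d c₁ hd1 hc₁pos hpair₁ hdist
    have hden : (0 : ℝ) < (C : ℝ) * E - (C : ℝ) ^ 2 := by nlinarith
    have heq : (d - 1) / c₁ = (E : ℝ) ^ 2 * p / ((C : ℝ) * E - (C : ℝ) ^ 2) * n := by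
      rw [div_eq_iff hc₁pos.ne', hd, hc₁]
      have hEC : (E:ℝ) - C ≠ 0 := by linarith
      field_simp
      ring
    have hq1 : (E : ℝ) ^ 2 * p / ((C : ℝ) * E - (C : ℝ) ^ 2) ≤ 1 := by
      rw [div_le_one hden]
      have hth : (1 - (C : ℝ) / E) * ((C : ℝ) / E) = ((E : ℝ) - C) * C / (E : ℝ) ^ 2 := by
        rw [one_sub_div hER.ne', div_mul_div_comm, ← pow_two]
      rw [hth] at hp
      rw [le_div_iff₀ (by positivity : (0:ℝ) < (E:ℝ)^2)] at hp
      nlinarith [hp]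
    have hq0 : 0 ≤ (E : ℝ) ^ 2 * p / ((C : ℝ) * E - (C : ℝ) ^ 2) :=
      div_nonneg (by positivity) hden.le
    have hfl : min n ⌊(d - 1) / c₁⌋₊ = ⌊(d - 1) / c₁⌋₊ := by
      apply min_eq_right
      apply Nat.floor_le_of_le
      rw [heq]
      nlinarith
    have hklow : (E : ℝ) ^ 2 * p / ((C : ℝ) * E - (C : ℝ) ^ 2) * n - 1
        ≤ ((min n ⌊(d - 1) / c₁⌋₊ : ℕ) : ℝ) := by
      rw [hfl, heq]
      exact (Nat.sub_one_lt_floor _).le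
    have hterm : 1 - ((min n ⌊(d - 1) / c₁⌋₊ : ℕ) : ℝ) / n
        ≤ 1 - (E : ℝ) ^ 2 * p / ((C : ℝ) * E - (C : ℝ) ^ 2) + 1 / n := by
      have h1 : ((E : ℝ) ^ 2 * p / ((C : ℝ) * E - (C : ℝ) ^ 2) * n - 1) / n
          ≤ ((min n ⌊(d - 1) / c₁⌋₊ : ℕ) : ℝ) / n := (div_le_div_iff_of_pos_right hnR).mpr hklow
      have h2 : ((E : ℝ) ^ 2 * p / ((C : ℝ) * E - (C : ℝ) ^ 2) * n - 1) / n
          = (E : ℝ) ^ 2 * p / ((C : ℝ) * E - (C : ℝ) ^ 2) - 1 / n := by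
        field_simp
      linarith
    linarith [hrb, hterm, htail, hinv]
  · -- E ≥ 2C, p large
    intro h2CE hlt
    have hCltE : (C : ℝ) < E := by
      have : C < E := by omega
      exact_mod_cast this
    set c₁ : ℝ := 2 * ((C : ℝ) * m) * (1 - ((C : ℝ) * m) / ((E : ℝ) * m)) with hc₁
    have hfrac : ((C : ℝ) * m) / ((E : ℝ) * m) < 1 := by
      rw [div_lt_one (by positivity)]
      nlinarith
    have hc₁pos : 0 < c₁ := by
      rw [hc₁]
      apply mul_pos (by positivity)
      linarith
    have hpair₁ : ∀ S : Finset (Matrix (Fin (C * m)) (Fin n) (ZMod 2)), ∀ K : Finset (Fin n),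
        ((∑ X1 ∈ S, ∑ X2 ∈ S, ∑ i ∈ K,
          colDelta That (fun r => (T * X1) r i) (fun r => (T * X2) r i) : ℕ) : ℝ)
          ≤ c₁ * K.card * S.card ^ 2 := by
      intro S K
      apply pair_sum_general That T hcov S K c₁
      intro i zf hwt
      have hb := sum_hammingDist_le_budget (N := E * m) (W := C * m)
        (Nat.mul_pos hE hm) (by calc 2 * (C * m) = (2 * C) * m := by ring
          _ ≤ E * m := Nat.mul_le_mul_right m h2CE) S zf (fun a _ => hwt a)
      calc ((∑ a ∈ S, ∑ b ∈ S, hammingDist (zf a) (zf b) : ℕ) : ℝ)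
          ≤ 2 * (C * m : ℕ) * (1 - ((C * m : ℕ) : ℝ) / ((E * m : ℕ) : ℝ)) * S.card ^ 2 := hb
        _ = c₁ * S.card ^ 2 := by rw [hc₁]; push_cast; ring
    have hrb := rate_bound hC hm hn1 That T 𝒞 d c₁ hd1 hc₁pos hpair₁ hdist
    have hden : (0 : ℝ) < (C : ℝ) * E - (C : ℝ) ^ 2 := by nlinarith
    have heq : (d - 1) / c₁ = (E : ℝ) ^ 2 * p / ((C : ℝ) * E - (C : ℝ) ^ 2) * n := by
      rw [div_eq_iff hc₁pos.ne', hd, hc₁]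
      have hEC : (E:ℝ) - C ≠ 0 := by linarith
      field_simp
      ring
    have hqgt : 1 ≤ (E : ℝ) ^ 2 * p / ((C : ℝ) * E - (C : ℝ) ^ 2) := by
      rw [le_div_iff₀ hden]
      have hth : (1 - (C : ℝ) / E) * ((C : ℝ) / E) = ((E : ℝ) - C) * C / (E : ℝ) ^ 2 := by
        rw [one_sub_div hER.ne', div_mul_div_comm, ← pow_two]
      rw [hth] at hlt
      rw [div_lt_iff₀ (by positivity : (0:ℝ) < (E:ℝ)^2)] at hlt
      nlinarith [hlt]
    have hge : (n : ℝ) ≤ (d - 1) / c₁ := by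
      rw [heq]
      nlinarith
    have hfl : min n ⌊(d - 1) / c₁⌋₊ = n := min_eq_left (Nat.le_floor hge)
    rw [hfl] at hrb
    rw [div_self hnR.ne'] at hrb
    linarith [hrb, htail]
  · -- E < 2C, p ≤ 1/4
    intro hE2C hp
    set c₂ : ℝ := (E : ℝ) * m / 2 with hc₂
    have hc₂pos : 0 < c₂ := by rw [hc₂]; positivity
    have hpair₂ : ∀ S : Finset (Matrix (Fin (C * m)) (Fin n) (ZMod 2)), ∀ K : Finset (Fin n),
        ((∑ X1 ∈ S, ∑ X2 ∈ S, ∑ i ∈ K,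
          colDelta That (fun r => (T * X1) r i) (fun r => (T * X2) r i) : ℕ) : ℝ)
          ≤ c₂ * K.card * S.card ^ 2 := by
      intro S K
      apply pair_sum_general That T hcov S K c₂
      intro i zf hwt
      calc ((∑ a ∈ S, ∑ b ∈ S, hammingDist (zf a) (zf b) : ℕ) : ℝ)
          ≤ ((E * m : ℕ) : ℝ) / 2 * S.card ^ 2 := sum_hammingDist_le_general S zf
        _ = c₂ * S.card ^ 2 := by rw [hc₂]; push_cast; ring
    have hrb := rate_bound hC hm hn1 That T 𝒞 d c₂ hd1 hc₂pos hpair₂ hdist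
    have heq : (d - 1) / c₂ = 4 * p * n := by
      rw [div_eq_iff hc₂pos.ne', hd, hc₂]
      field_simp
      ring
    have hfl : min n ⌊(d - 1) / c₂⌋₊ = ⌊(d - 1) / c₂⌋₊ := by
      apply min_eq_right
      apply Nat.floor_le_of_le
      rw [heq]
      nlinarith
    have hklow : 4 * p * n - 1 ≤ ((min n ⌊(d - 1) / c₂⌋₊ : ℕ) : ℝ) := by
      rw [hfl, heq]
      exact (Nat.sub_one_lt_floor _).le
    have hterm : 1 - ((min n ⌊(d - 1) / c₂⌋₊ : ℕ) : ℝ) / n ≤ 1 - 4 * p + 1 / n := by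
      have h1 : (4 * p * n - 1) / n ≤ ((min n ⌊(d - 1) / c₂⌋₊ : ℕ) : ℝ) / n :=
        (div_le_div_iff_of_pos_right hnR).mpr hklow
      have h2 : (4 * p * n - 1) / n = 4 * p - 1 / n := by field_simp
      linarith
    linarith [hrb, hterm, htail, hinv]
  · -- E < 2C, p > 1/4
    intro hE2C hlt
    set c₂ : ℝ := (E : ℝ) * m / 2 with hc₂
    have hc₂pos : 0 < c₂ := by rw [hc₂]; positivity
    have hpair₂ : ∀ S : Finset (Matrix (Fin (C * m)) (Fin n) (ZMod 2)), ∀ K : Finset (Fin n),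
        ((∑ X1 ∈ S, ∑ X2 ∈ S, ∑ i ∈ K,
          colDelta That (fun r => (T * X1) r i) (fun r => (T * X2) r i) : ℕ) : ℝ)
          ≤ c₂ * K.card * S.card ^ 2 := by
      intro S K
      apply pair_sum_general That T hcov S K c₂
      intro i zf hwt
      calc ((∑ a ∈ S, ∑ b ∈ S, hammingDist (zf a) (zf b) : ℕ) : ℝ)
          ≤ ((E * m : ℕ) : ℝ) / 2 * S.card ^ 2 := sum_hammingDist_le_general S zf
        _ = c₂ * S.card ^ 2 := by rw [hc₂]; push_cast; ring
    have hrb := rate_bound hC hm hn1 That T 𝒞 d c₂ hd1 hc₂pos hpair₂ hdist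
    have heq : (d - 1) / c₂ = 4 * p * n := by
      rw [div_eq_iff hc₂pos.ne', hd, hc₂]
      field_simp
      ring
    have hge : (n : ℝ) ≤ (d - 1) / c₂ := by
      rw [heq]
      nlinarith
    have hfl : min n ⌊(d - 1) / c₂⌋₊ = n := min_eq_left (Nat.le_floor hge)
    rw [hfl] at hrb
    rw [div_self hnR.ne'] at hrb
    linarith [hrb, htail]
end

section
/- GMD decoding expectation lemma: let W = (W_1,…,W_N) be the transmitted concatenated codeword and Y = (Y_1,…,Y_N) the received word with total transform distance d_{T̂}(W,Y) < (d_out·d_in)/2. For each i, decode Y_i to V_i minimizing d_{T̂}(C_in(V_i), Y_i), set ω_i = min(d_{T̂}(C_in(V_i), Y_i), d_in/2), and independently erase position i with probability 2ω_i/d_in. If e is the number of non-erased wrong positions (C_in(V_i) ≠ W_i) and s the number of erasures, then E[2e + s] < d_out. -/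
open Matrix Finset

lemma fun_add_self {a : ℕ} (x : Fin a → ZMod 2) : x + x = 0 := by
  funext r; exact CharTwo.add_self_eq_zero _

lemma colDelta_set_nonempty {a c : ℕ} {B : Matrix (Fin a) (Fin c) (ZMod 2)}
    (hsurj : Function.Surjective B.mulVec) (u v : Fin a → ZMod 2) :
    {k | ∃ s : Finset (Fin c), s.card = k ∧ u + ∑ j ∈ s, Bᵀ j = v}.Nonempty := by
  classical
  obtain ⟨w, hw⟩ := hsurj (v - u)
  refine ⟨(Finset.univ.filter (fun j => w j = 1)).card, Finset.univ.filter (fun j => w j = 1), rfl, ?_⟩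
  have hsum : ∑ j ∈ Finset.univ.filter (fun j => w j = 1), Bᵀ j = v - u := by
    rw [← hw]
    funext r
    refine (Finset.sum_apply (g := fun j => Bᵀ j) r _).trans ?_
    simp only [Matrix.transpose_apply, Matrix.mulVec, dotProduct]
    rw [Finset.sum_filter]
    apply Finset.sum_congr rfl
    intro j _
    rcases (show ∀ x : ZMod 2, x = 0 ∨ x = 1 by decide) (w j) with h | h <;> simp [h]
  rw [hsum]; abel

lemma colDelta_symm {a c : ℕ} (B : Matrix (Fin a) (Fin c) (ZMod 2))
    (u v : Fin a → ZMod 2) : colDelta B u v = colDelta B v u := by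
  unfold colDelta
  congr 1
  ext k
  constructor <;> rintro ⟨s, hs, heq⟩ <;>
    exact ⟨s, hs, by rw [← heq, add_assoc, fun_add_self, add_zero]⟩

lemma colDelta_triangle {a c : ℕ} {B : Matrix (Fin a) (Fin c) (ZMod 2)}
    (hsurj : Function.Surjective B.mulVec) (u v w : Fin a → ZMod 2) :
    colDelta B u w ≤ colDelta B u v + colDelta B v w := by
  classical
  obtain ⟨s1, hs1, he1⟩ := Nat.sInf_mem (colDelta_set_nonempty hsurj u v)
  obtain ⟨s2, hs2, he2⟩ := Nat.sInf_mem (colDelta_set_nonempty hsurj v w)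
  have hdisj : Disjoint (symmDiff s1 s2) (s1 ∩ s2) := by
    simpa using disjoint_symmDiff_inf s1 s2
  have hunion : symmDiff s1 s2 ∪ (s1 ∩ s2) = s1 ∪ s2 := by
    simpa using symmDiff_sup_inf s1 s2
  have hsum : ∑ j ∈ symmDiff s1 s2, Bᵀ j = ∑ j ∈ s1, Bᵀ j + ∑ j ∈ s2, Bᵀ j := by
    have h1 : ∑ j ∈ symmDiff s1 s2, (Bᵀ j) + ∑ j ∈ s1 ∩ s2, (Bᵀ j)
        = ∑ j ∈ s1 ∪ s2, (Bᵀ j) := by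
      have := Finset.sum_union hdisj (f := fun j => Bᵀ j)
      rw [hunion] at this
      exact this.symm
    have h2 : ∑ j ∈ s1 ∪ s2, (Bᵀ j) + ∑ j ∈ s1 ∩ s2, (Bᵀ j)
        = ∑ j ∈ s1, (Bᵀ j) + ∑ j ∈ s2, (Bᵀ j) := Finset.sum_union_inter
    have h3 := fun_add_self (∑ j ∈ s1 ∩ s2, (Bᵀ j))
    calc ∑ j ∈ symmDiff s1 s2, (Bᵀ j)
        = ∑ j ∈ symmDiff s1 s2, (Bᵀ j) + (∑ j ∈ s1 ∩ s2, (Bᵀ j) + ∑ j ∈ s1 ∩ s2, (Bᵀ j)) := by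
          rw [h3, add_zero]
      _ = (∑ j ∈ symmDiff s1 s2, (Bᵀ j) + ∑ j ∈ s1 ∩ s2, (Bᵀ j)) + ∑ j ∈ s1 ∩ s2, (Bᵀ j) := by
          rw [add_assoc]
      _ = ∑ j ∈ s1, (Bᵀ j) + ∑ j ∈ s2, (Bᵀ j) := by rw [h1, h2]
  have hmem : u + ∑ j ∈ symmDiff s1 s2, Bᵀ j = w := by
    rw [hsum, ← add_assoc, he1, he2]
  calc colDelta B u w ≤ (symmDiff s1 s2).card :=
        Nat.sInf_le ⟨symmDiff s1 s2, rfl, hmem⟩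
    _ ≤ (s1 ∪ s2).card := Finset.card_le_card (by simpa using symmDiff_le_sup (a := s1) (b := s2))
    _ ≤ s1.card + s2.card := Finset.card_union_le s1 s2
    _ = colDelta B u v + colDelta B v w := by rw [hs1, hs2]; rfl

lemma transDist_symm {a b c : ℕ} (B : Matrix (Fin a) (Fin c) (ZMod 2))
    (M1 M2 : Matrix (Fin a) (Fin b) (ZMod 2)) :
    transDist B M1 M2 = transDist B M2 M1 :=
  Finset.sum_congr rfl fun i _ => colDelta_symm B _ _

lemma transDist_triangle {a b c : ℕ} {B : Matrix (Fin a) (Fin c) (ZMod 2)}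
    (hsurj : Function.Surjective B.mulVec)
    (M1 M2 M3 : Matrix (Fin a) (Fin b) (ZMod 2)) :
    transDist B M1 M3 ≤ transDist B M1 M2 + transDist B M2 M3 := by
  rw [transDist, transDist, transDist, ← Finset.sum_add_distrib]
  exact Finset.sum_le_sum fun i _ => colDelta_triangle hsurj _ _ _

open scoped Classical in
/-- GMD decoding expectation lemma: if the transmitted concatenated codeword
`W = (W_1,…,W_N)` and the received word `Y` satisfy `d_{T̂}(W,Y) < d_out·d_in/2`,
`V_i` is a minimum-transform-distance inner decoding of `Y_i`, `ω_i = min(d_{T̂}(C_in(V_i),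
Y_i), d_in/2)`, and position `i` is independently erased with probability `2ω_i/d_in`,
then the expected value of (2 × number of non-erased wrong positions + number of
erasures), namely `Σ_i (1[C_in(V_i) ≠ W_i]·2(1 - 2ω_i/d_in) + 2ω_i/d_in)`,
is less than `d_out`. -/
theorem gmd_expectation {a c L N dIn dOut : ℕ} {ι : Type*}
    (hdIn : 0 < dIn)
    (That : Matrix (Fin a) (Fin c) (ZMod 2))
    (hsurj : Function.Surjective That.mulVec)
    (Cin : ι → Matrix (Fin a) (Fin L) (ZMod 2))
    (hmin : ∀ x y : ι, Cin x ≠ Cin y → dIn ≤ transDist That (Cin x) (Cin y))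
    (W Y : Fin N → Matrix (Fin a) (Fin L) (ZMod 2))
    (hW : ∀ i, ∃ x, W i = Cin x)
    (V : Fin N → ι)
    (hV : ∀ i, ∀ x, transDist That (Cin (V i)) (Y i) ≤ transDist That (Cin x) (Y i))
    (htot : (∑ i, (transDist That (W i) (Y i) : ℝ)) < (dOut : ℝ) * dIn / 2) :
    (∑ i, ((if Cin (V i) ≠ W i then
        2 * (1 - 2 * (min ((transDist That (Cin (V i)) (Y i) : ℝ)) ((dIn : ℝ) / 2)) / dIn)
      else 0)
      + 2 * (min ((transDist That (Cin (V i)) (Y i) : ℝ)) ((dIn : ℝ) / 2)) / dIn)) <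
      (dOut : ℝ) := by
  have hdInR : (0 : ℝ) < dIn := by exact_mod_cast hdIn
  have key : ∀ i, ((if Cin (V i) ≠ W i then
        2 * (1 - 2 * (min ((transDist That (Cin (V i)) (Y i) : ℝ)) ((dIn : ℝ) / 2)) / dIn)
      else 0)
      + 2 * (min ((transDist That (Cin (V i)) (Y i) : ℝ)) ((dIn : ℝ) / 2)) / dIn)
      ≤ 2 * (transDist That (W i) (Y i) : ℝ) / dIn := by
    intro i
    set D : ℝ := (transDist That (Cin (V i)) (Y i) : ℝ) with hD
    set δ : ℝ := (transDist That (W i) (Y i) : ℝ) with hδ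
    set ω : ℝ := min D ((dIn : ℝ) / 2) with hω
    have hDδ : D ≤ δ := by
      obtain ⟨x, hx⟩ := hW i
      rw [hD, hδ, hx]
      exact_mod_cast hV i x
    have hωD : ω ≤ D := min_le_left _ _
    have hωhalf : ω ≤ (dIn : ℝ) / 2 := min_le_right _ _
    by_cases h : Cin (V i) = W i
    · rw [if_neg (not_not_intro h), zero_add]
      have : ω ≤ δ := le_trans hωD hDδ
      gcongr
    · rw [if_pos h]
      have hkey : (dIn : ℝ) ≤ ω + δ := by
        by_cases hcase : D ≤ (dIn : ℝ) / 2
        · have hωeq : ω = D := min_eq_left hcase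
          obtain ⟨x, hx⟩ := hW i
          have hne : Cin (V i) ≠ Cin x := by rw [← hx]; exact h
          have htri : transDist That (Cin (V i)) (W i)
              ≤ transDist That (Cin (V i)) (Y i) + transDist That (Y i) (W i) :=
            transDist_triangle hsurj _ _ _
          have hge : dIn ≤ transDist That (Cin (V i)) (W i) := by
            rw [hx]; exact hmin _ _ hne
          have hsymm : transDist That (Y i) (W i) = transDist That (W i) (Y i) :=
            transDist_symm _ _ _
          rw [hsymm] at htri
          have : (dIn : ℝ) ≤ D + δ := by rw [hD, hδ]; exact_mod_cast le_trans hge htri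
          linarith [hωeq ▸ this]
        · push_neg at hcase
          have hωeq : ω = (dIn : ℝ) / 2 := min_eq_right (le_of_lt hcase)
          linarith
      have expand : 2 * (1 - 2 * ω / dIn) + 2 * ω / dIn = (2 * dIn - 2 * ω) / dIn := by
        field_simp
        ring
      rw [expand]
      gcongr
      linarith
  calc (∑ i, ((if Cin (V i) ≠ W i then
        2 * (1 - 2 * (min ((transDist That (Cin (V i)) (Y i) : ℝ)) ((dIn : ℝ) / 2)) / dIn)
      else 0)
      + 2 * (min ((transDist That (Cin (V i)) (Y i) : ℝ)) ((dIn : ℝ) / 2)) / dIn))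
      ≤ ∑ i, 2 * (transDist That (W i) (Y i) : ℝ) / dIn :=
        Finset.sum_le_sum fun i _ => key i
    _ = 2 * (∑ i, (transDist That (W i) (Y i) : ℝ)) / dIn := by
        rw [← Finset.sum_div, ← Finset.mul_sum]
    _ < (dOut : ℝ) := by
        rw [div_lt_iff₀ hdInR]
        nlinarith
end
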